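/- arXiv:2401.07455 — 2 statements merged into one kernel-verified Lean document; each statement's English description precedes it below -/
import Mathlib

section
/- Let s be a time profile and let Δs > 0 be such that m/μ, t⁻ and every departure time s_k are integer multiples of Δs. If d_P − s_1 > m(P−1)/μ, then there exists a real t that is an integer multiple of Δs, with t ≠ s_k for all k ∈ {1,…,P}, such that the forecasted cost satisfies Ĉ(t | s) ≤ ρ. -/
/-- Schedule delay cost function `V(d) = β·max(−d,0) + γ·max(d,0)`. -/
noncomputable def sdc (β γ d : ℝ) : ℝ := β * max (-d) 0 + γ * max d 0

/-- Destination arrival times: `d 0 = s 0`, `d (k+1) = max (d k + m/μ) (s (k+1))`. -/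
noncomputable def arr (m μ : ℝ) (s : ℕ → ℝ) : ℕ → ℝ
  | 0 => s 0
  | k + 1 => max (arr m μ s k + m / μ) (s (k + 1))

/-- Trip cost of the `k`-th departing user. -/
noncomputable def cost (β γ m μ : ℝ) (s : ℕ → ℝ) (k : ℕ) : ℝ :=
  (arr m μ s k - s k) + sdc β γ (arr m μ s k)

/-- A time profile: strictly increasing departure times (0-indexed, users `0,…,P-1`). -/
def IsProfile (P : ℕ) (s : ℕ → ℝ) : Prop := ∀ i, i + 1 < P → s i < s (i + 1)

/-- Equilibrium departure time of the first user. -/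
noncomputable def tminus (P : ℕ) (m μ β γ : ℝ) : ℝ :=
  -(m * ((P : ℝ) - 1) / μ) * (γ / (β + γ))

/-- Equilibrium departure time of the last user. -/
noncomputable def tplus (P : ℕ) (m μ β γ : ℝ) : ℝ :=
  tminus P m μ β γ + m * ((P : ℝ) - 1) / μ

/-- Equilibrium trip cost. -/
noncomputable def rho (P : ℕ) (m μ β γ : ℝ) : ℝ :=
  (m * ((P : ℝ) - 1) / μ) * (β * γ / (β + γ))

/-- The equilibrium profile `s^e` (0-indexed: index `k` is the `(k+1)`-st departing user). -/
noncomputable def se (P : ℕ) (m μ β γ : ℝ) (k : ℕ) : ℝ :=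
  if (k : ℤ) ≤ ⌊γ * ((P : ℝ) - 1) / (β + γ)⌋ then
    tminus P m μ β γ + (m * (1 - β) / μ) * (k : ℝ)
  else
    tminus P m μ β γ + (m * (1 + γ) / μ) * (k : ℝ) - m * γ * ((P : ℝ) - 1) / μ

/-- The forecasted cost `Ĉ(t | s) = c`, as a relation (the cases are mutually exclusive
for `t` distinct from all departure times of the strictly increasing profile `s`). -/
def Forecast (P : ℕ) (β γ m μ : ℝ) (s : ℕ → ℝ) (t c : ℝ) : Prop :=
  (∃ k, k + 1 < P ∧ s k < t ∧ t < s (k + 1) ∧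
      arr m μ s (k + 1) - arr m μ s k = m / μ ∧
      c = cost β γ m μ s k +
        (cost β γ m μ s (k + 1) - cost β γ m μ s k) / (s (k + 1) - s k) * (t - s k)) ∨
  (∃ k, k + 1 < P ∧ s k < t ∧ t < s (k + 1) ∧
      m / μ < arr m μ s (k + 1) - arr m μ s k ∧
      ((t ≤ arr m μ s k ∧
          c = cost β γ m μ s k +
            (sdc β γ (arr m μ s k) - cost β γ m μ s k) / (arr m μ s k - s k) * (t - s k)) ∨
        (arr m μ s k < t ∧ c = sdc β γ t))) ∨
  (s (P - 1) < t ∧ t < arr m μ s (P - 1) ∧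
      c = cost β γ m μ s (P - 1) +
        (sdc β γ (arr m μ s (P - 1)) - cost β γ m μ s (P - 1)) /
          (arr m μ s (P - 1) - s (P - 1)) * (t - s (P - 1))) ∨
  ((t < s 0 ∨ arr m μ s (P - 1) ≤ t) ∧ c = sdc β γ t)

lemma arr_step_ge (m μ : ℝ) (s : ℕ → ℝ) (k : ℕ) :
    arr m μ s k + m / μ ≤ arr m μ s (k + 1) := le_max_left _ _

lemma s_le_arr (m μ : ℝ) (s : ℕ → ℝ) (k : ℕ) : s k ≤ arr m μ s k := by
  cases k with
  | zero => exact le_of_eq rfl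
  | succ n => exact le_max_right _ _

lemma arr_eq_s_of_gap (m μ : ℝ) (s : ℕ → ℝ) (k : ℕ)
    (hgap : m / μ < arr m μ s (k + 1) - arr m μ s k) :
    arr m μ s (k + 1) = s (k + 1) := by
  rcases max_cases (arr m μ s k + m / μ) (s (k + 1)) with ⟨h1, _⟩ | ⟨h1, _⟩
  · exfalso
    have : arr m μ s (k + 1) = arr m μ s k + m / μ := h1
    linarith
  · exact h1

lemma arr_le_of_no_gap (m μ : ℝ) (s : ℕ → ℝ) (n : ℕ)
    (hng : ∀ k < n, arr m μ s (k + 1) - arr m μ s k ≤ m / μ) :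
    arr m μ s n ≤ s 0 + n * (m / μ) := by
  induction n with
  | zero => simp [arr]
  | succ n ih =>
    have h1 := hng n (Nat.lt_succ_self n)
    have h2 : arr m μ s n ≤ s 0 + n * (m / μ) :=
      ih (fun k hk => hng k (hk.trans (Nat.lt_succ_self n)))
    push_cast
    nlinarith

lemma s_strictmono {P : ℕ} {s : ℕ → ℝ} (hs : IsProfile P s) :
    ∀ j, j < P → ∀ i, i < j → s i < s j := by
  intro j hj
  induction j with
  | zero => intro i hi; omega
  | succ n ih =>
    intro i hi
    have hn : s n < s (n + 1) := hs n hj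
    rcases Nat.lt_succ_iff_lt_or_eq.mp hi with h | h
    · exact (ih (by omega) i h).trans hn
    · subst h; exact hn

lemma s_le_of_le {P : ℕ} {s : ℕ → ℝ} (hs : IsProfile P s) {i j : ℕ}
    (hij : i ≤ j) (hj : j < P) : s i ≤ s j := by
  rcases lt_or_eq_of_le hij with h | h
  · exact (s_strictmono hs j hj i h).le
  · subst h; rfl

lemma sdc_le_rho (P : ℕ) (hP : 2 ≤ P) (m μ β γ : ℝ) (hm : 0 < m) (hμ : 0 < μ)
    (hβ : 0 < β) (hγ : 0 < γ) {x : ℝ} (h1 : tminus P m μ β γ ≤ x)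
    (h2 : x ≤ tplus P m μ β γ) : sdc β γ x ≤ rho P m μ β γ := by
  have hP2 : (2:ℝ) ≤ (P:ℝ) := by exact_mod_cast hP
  have hbg : 0 < β + γ := by linarith
  have hL : 0 ≤ m * ((P:ℝ) - 1) / μ := div_nonneg (by nlinarith) hμ.le
  have hq1 : β * (-(tminus P m μ β γ)) = rho P m μ β γ := by
    unfold tminus rho; field_simp
  have hq2 : γ * tplus P m μ β γ = rho P m μ β γ := by
    unfold tplus tminus rho; field_simp; ring
  rcases le_total x 0 with hx | hx
  · have hmx : max x 0 = 0 := max_eq_right hx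
    have hnx : max (-x) 0 = -x := max_eq_left (by linarith)
    have : sdc β γ x = β * (-x) := by rw [sdc, hmx, hnx]; ring
    rw [this, ← hq1]
    nlinarith
  · have hmx : max x 0 = x := max_eq_left hx
    have hnx : max (-x) 0 = 0 := max_eq_right (by linarith)
    have : sdc β γ x = γ * x := by rw [sdc, hmx, hnx]; ring
    rw [this, ← hq2]
    nlinarith
set_option maxHeartbeats 1000000 in
theorem exists_cheap_forecast_time (P : ℕ) (hP : 2 ≤ P) (m μ β γ : ℝ)
    (hm : 0 < m) (hm1 : m ≤ 1) (hμ : 0 < μ)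
    (hβ : 0 < β) (hβ1 : β < 1) (hγ : 0 < γ)
    (Δs : ℝ) (hΔs : 0 < Δs)
    (hgm : ∃ z : ℤ, m / μ = (z : ℝ) * Δs)
    (hgt : ∃ z : ℤ, tminus P m μ β γ = (z : ℝ) * Δs)
    (s : ℕ → ℝ) (hs : IsProfile P s)
    (hgs : ∀ k, k < P → ∃ z : ℤ, s k = (z : ℝ) * Δs)
    (h : m * ((P : ℝ) - 1) / μ < arr m μ s (P - 1) - s 0) :
    ∃ t : ℝ, (∃ z : ℤ, t = (z : ℝ) * Δs) ∧ (∀ k, k < P → t ≠ s k) ∧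
      ∃ c, Forecast P β γ m μ s t c ∧ c ≤ rho P m μ β γ := by
  classical
  have hP2 : (2:ℝ) ≤ (P:ℝ) := by exact_mod_cast hP
  have hg0 : 0 < m / μ := div_pos hm hμ
  have hbg : 0 < β + γ := by linarith
  have hPc : ((P - 1 : ℕ) : ℝ) = (P:ℝ) - 1 := by
    have h1 : 1 ≤ P := by omega
    push_cast [h1]
    ring
  have hLrw : m * ((P : ℝ) - 1) / μ = ((P:ℝ) - 1) * (m / μ) := by ring
  have hL : 0 ≤ m * ((P:ℝ) - 1) / μ := div_nonneg (by nlinarith) hμ.le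
  have htmtp : tminus P m μ β γ ≤ tplus P m μ β γ := by
    unfold tplus; linarith
  have htpeq : tplus P m μ β γ = tminus P m μ β γ + ((P:ℝ) - 1) * (m / μ) := by
    unfold tplus; rw [hLrw]
  -- multiples machinery
  obtain ⟨zg, hzg⟩ := hgm
  have hzg1 : (1:ℝ) ≤ (zg:ℝ) := by
    have : (0:ℤ) < zg := by
      by_contra hz
      push_neg at hz
      have : (zg:ℝ) ≤ 0 := by exact_mod_cast hz
      nlinarith
    exact_mod_cast this
  have hgΔ : Δs ≤ m / μ := by rw [hzg]; nlinarith
  have hMadd : ∀ {a b : ℝ}, (∃ z : ℤ, a = (z:ℝ) * Δs) → (∃ z : ℤ, b = (z:ℝ) * Δs) →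
      (∃ z : ℤ, a + b = (z:ℝ) * Δs) := by
    rintro a b ⟨z1, rfl⟩ ⟨z2, rfl⟩
    exact ⟨z1 + z2, by push_cast; ring⟩
  have hMmax : ∀ {a b : ℝ}, (∃ z : ℤ, a = (z:ℝ) * Δs) → (∃ z : ℤ, b = (z:ℝ) * Δs) →
      (∃ z : ℤ, max a b = (z:ℝ) * Δs) := by
    intro a b ha hb
    rcases max_cases a b with ⟨h1, _⟩ | ⟨h1, _⟩
    · rw [h1]; exact ha
    · rw [h1]; exact hb
  have hMstep : ∀ {a b : ℝ}, (∃ z : ℤ, a = (z:ℝ) * Δs) → (∃ z : ℤ, b = (z:ℝ) * Δs) →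
      a < b → a + Δs ≤ b := by
    rintro a b ⟨z1, rfl⟩ ⟨z2, rfl⟩ hab
    have hz12 : z1 < z2 := by
      by_contra hc
      push_neg at hc
      have : (z2:ℝ) ≤ (z1:ℝ) := by exact_mod_cast hc
      nlinarith
    have : (z1:ℝ) + 1 ≤ (z2:ℝ) := by exact_mod_cast hz12
    nlinarith
  have hMg : ∃ z : ℤ, m / μ = (z:ℝ) * Δs := ⟨zg, hzg⟩
  have hMarr : ∀ k, k < P → ∃ z : ℤ, arr m μ s k = (z:ℝ) * Δs := by
    intro k
    induction k with
    | zero => intro hk; exact hgs 0 hk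
    | succ n ih =>
      intro hk
      exact hMmax (hMadd (ih (by omega)) hMg) (hgs (n+1) hk)
  have hMtp : ∃ z : ℤ, tplus P m μ β γ = (z:ℝ) * Δs := by
    rw [htpeq, ← hPc]
    refine hMadd hgt ⟨(P - 1 : ℕ) * zg, ?_⟩
    rw [hzg]; push_cast; ring
  by_cases hA : tminus P m μ β γ < s 0
  · refine ⟨tminus P m μ β γ, hgt, ?_, sdc β γ (tminus P m μ β γ), ?_, ?_⟩
    · intro k hk
      have : s 0 ≤ s k := s_le_of_le hs (Nat.zero_le k) hk
      exact ne_of_lt (by linarith)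
    · exact Or.inr (Or.inr (Or.inr ⟨Or.inl hA, rfl⟩))
    · exact sdc_le_rho P hP m μ β γ hm hμ hβ hγ le_rfl htmtp
  push_neg at hA
  by_cases hA' : arr m μ s (P - 1) < tplus P m μ β γ
  · refine ⟨tplus P m μ β γ, hMtp, ?_, sdc β γ (tplus P m μ β γ), ?_, ?_⟩
    · intro k hk
      have h1 : s k ≤ s (P - 1) := s_le_of_le hs (by omega) (by omega)
      have h2 : s (P - 1) ≤ arr m μ s (P - 1) := s_le_arr m μ s (P - 1)
      exact ne_of_gt (by linarith)
    · exact Or.inr (Or.inr (Or.inr ⟨Or.inr hA'.le, rfl⟩))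
    · exact sdc_le_rho P hP m μ β γ hm hμ hβ hγ htmtp le_rfl
  push_neg at hA'
  -- main case
  have hex : ∃ k, k + 1 < P ∧ m / μ < arr m μ s (k + 1) - arr m μ s k := by
    by_contra hc
    push_neg at hc
    have hb : arr m μ s (P - 1) ≤ s 0 + (P - 1 : ℕ) * (m / μ) :=
      arr_le_of_no_gap m μ s (P - 1) (fun k hk => hc k (by omega))
    rw [hPc] at hb
    rw [hLrw] at h
    linarith
  set Q : ℕ → Prop :=
    fun k => k + 1 < P ∧ m / μ < arr m μ s (k + 1) - arr m μ s k ∧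
      arr m μ s k < tplus P m μ β γ with hQ
  obtain ⟨k0, hk0, hk0min⟩ :
      ∃ k0, (k0 + 1 < P ∧ m / μ < arr m μ s (k0 + 1) - arr m μ s k0) ∧
        ∀ k < k0, ¬(k + 1 < P ∧ m / μ < arr m μ s (k + 1) - arr m μ s k) :=
    ⟨Nat.find hex, Nat.find_spec hex, fun k hk => Nat.find_min hex hk⟩
  have harrk0 : arr m μ s k0 ≤ s 0 + (k0 : ℕ) * (m / μ) := by
    refine arr_le_of_no_gap m μ s k0 (fun k hk => ?_)
    by_contra hlt
    push_neg at hlt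
    exact hk0min k hk ⟨by omega, hlt⟩
  have hk0P : (k0:ℝ) ≤ (P:ℝ) - 2 := by
    have : k0 + 2 ≤ P := by omega
    have : (k0:ℝ) + 2 ≤ (P:ℝ) := by exact_mod_cast this
    linarith
  have hk0lt : arr m μ s k0 < tplus P m μ β γ := by
    rw [htpeq]
    nlinarith
  have hQk0 : Q k0 := ⟨hk0.1, hk0.2, hk0lt⟩
  obtain ⟨K, hQK, hKmax, hKle⟩ :
      ∃ K, Q K ∧ (∀ k', K < k' → k' ≤ P - 2 → ¬Q k') ∧ K ≤ P - 2 :=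
    ⟨Nat.findGreatest Q (P - 2), Nat.findGreatest_spec (m := k0) (by omega) hQk0,
      fun k' h1 h2 => Nat.findGreatest_is_greatest h1 h2, Nat.findGreatest_le _⟩
  obtain ⟨hKP, hKgap, hKlt⟩ := hQK
  have hdown : ∀ i : ℕ, K + 1 ≤ P - 1 - i →
      tplus P m μ β γ ≤ arr m μ s (P - 1 - i) + (i:ℝ) * (m / μ) := by
    intro i
    induction i with
    | zero => intro _; simpa using hA'
    | succ i ih =>
      intro hle
      have ih' := ih (by omega)
      have hidx : P - 1 - i = (P - 1 - (i + 1)) + 1 := by omega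
      set j := P - 1 - (i + 1) with hj
      rw [hidx] at ih'
      by_cases hgap : m / μ < arr m μ s (j + 1) - arr m μ s j
      · have hjP : j + 1 < P := by omega
        have harrj : tplus P m μ β γ ≤ arr m μ s j := by
          by_contra hcc
          push_neg at hcc
          exact hKmax j (by omega) (by omega) ⟨hjP, hgap, hcc⟩
        have : (0:ℝ) ≤ ((i:ℝ) + 1) * (m / μ) := by positivity
        push_cast
        linarith
      · push_neg at hgap
        push_cast
        push_cast at ih'
        linarith
  have hkey : tplus P m μ β γ ≤ arr m μ s (K + 1) + ((P - 2 - K : ℕ):ℝ) * (m / μ) := by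
    have hidx : P - 1 - (P - 2 - K) = K + 1 := by omega
    have := hdown (P - 2 - K) (by omega)
    rwa [hidx] at this
  have hcast : ((P - 2 - K : ℕ):ℝ) ≤ (P:ℝ) - 2 := by
    have h1 : (P - 2 - K : ℕ) + 2 ≤ P := by omega
    have : ((P - 2 - K : ℕ):ℝ) + 2 ≤ (P:ℝ) := by exact_mod_cast h1
    linarith
  have hsk1 : tminus P m μ β γ + m / μ ≤ arr m μ s (K + 1) := by
    have hmul : ((P - 2 - K : ℕ):ℝ) * (m / μ) ≤ ((P:ℝ) - 2) * (m / μ) :=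
      mul_le_mul_of_nonneg_right hcast hg0.le
    rw [htpeq] at hkey
    linarith
  have harrK1 : arr m μ s (K + 1) = s (K + 1) := arr_eq_s_of_gap m μ s K hKgap
  set t := max (tminus P m μ β γ) (arr m μ s K + Δs) with htdef
  have htgtK : arr m μ s K < t :=
    lt_of_lt_of_le (by linarith) (le_max_right _ _)
  have htltK1 : t < s (K + 1) := by
    apply max_lt
    · rw [← harrK1]; linarith
    · have : arr m μ s K + m / μ < s (K + 1) := by rw [← harrK1]; linarith
      linarith
  have htle : t ≤ tplus P m μ β γ :=
    max_le htmtp (hMstep (hMarr K (by omega)) hMtp hKlt)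
  have htge : tminus P m μ β γ ≤ t := le_max_left _ _
  have hsKt : s K < t := lt_of_le_of_lt (s_le_arr m μ s K) htgtK
  refine ⟨t, hMmax hgt (hMadd (hMarr K (by omega)) ⟨1, by push_cast; ring⟩), ?_,
    sdc β γ t, ?_, ?_⟩
  · intro k hk
    rcases le_or_gt k K with hkK | hkK
    · have h1 : s k ≤ s K := s_le_of_le hs hkK (by omega)
      have h2 : s K ≤ arr m μ s K := s_le_arr m μ s K
      exact ne_of_gt (by linarith)
    · have h1 : s (K + 1) ≤ s k := s_le_of_le hs (by omega) hk
      exact ne_of_lt (by linarith)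
  · exact Or.inr (Or.inl ⟨K, hKP, hsKt, htltK1, hKgap, Or.inr ⟨htgtK, rfl⟩⟩)
  · exact sdc_le_rho P hP m μ β γ hm hμ hβ hγ htge htle
end

section
/- In the equilibrium profile s^e, for every real t with t ≠ s^e_k for all k ∈ {1,…,P}: the forecasted cost satisfies Ĉ(t | s^e) ≥ ρ; moreover, if t ∈ (t⁻, t⁺) then Ĉ(t | s^e) = ρ, and if t < t⁻ or t > t⁺ then Ĉ(t | s^e) = V(t) > ρ. -/
-- auxiliary lemmas

lemma cmp_div_le {D A B a b : ℝ} (hD : 0 < D) (ha : A = a / D) (hb : B = b / D)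
    (h : a ≤ b) : A ≤ B := by rw [ha, hb, div_le_div_iff_of_pos_right hD]; exact h

lemma cmp_div_lt {D A B a b : ℝ} (hD : 0 < D) (ha : A = a / D) (hb : B = b / D)
    (h : a < b) : A < B := by rw [ha, hb, div_lt_div_iff_of_pos_right hD]; exact h

lemma sdc_of_nonpos (β γ d : ℝ) (hd : d ≤ 0) : sdc β γ d = -(β * d) := by
  unfold sdc
  rw [max_eq_left (by linarith : (0:ℝ) ≤ -d), max_eq_right hd]; ring

lemma sdc_of_nonneg (β γ d : ℝ) (hd : 0 ≤ d) : sdc β γ d = γ * d := by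
  unfold sdc
  rw [max_eq_right (by linarith : -d ≤ (0:ℝ)), max_eq_left hd]; ring

lemma se_strictMono (P : ℕ) (m μ β γ : ℝ) (hm : 0 < m) (hμ : 0 < μ)
    (hβ : 0 < β) (hβ1 : β < 1) (hγ : 0 < γ) :
    StrictMono (se P m μ β γ) := by
  have hβγ : 0 < β + γ := by linarith
  have hD : 0 < μ * (β + γ) := mul_pos hμ hβγ
  apply strictMono_nat_of_lt_succ
  intro k
  set F := ⌊γ * ((P : ℝ) - 1) / (β + γ)⌋ with hF
  by_cases h1 : ((k:ℕ) : ℤ) ≤ F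
  · by_cases h2 : (((k+1:ℕ)) : ℤ) ≤ F
    · simp only [se, if_pos (show ((k:ℕ):ℤ) ≤ ⌊γ * ((P : ℝ) - 1) / (β + γ)⌋ from h1), if_pos (show (((k+1:ℕ)):ℤ) ≤ ⌊γ * ((P : ℝ) - 1) / (β + γ)⌋ from h2)]
      refine cmp_div_lt (D := μ * (β + γ)) hD
        (a := -(m*((P:ℝ)-1)*γ) + m*(1-β)*(k:ℝ)*(β+γ))
        (b := -(m*((P:ℝ)-1)*γ) + m*(1-β)*((k:ℝ)+1)*(β+γ)) ?_ ?_ ?_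
      · unfold tminus; field_simp; try ring
      · unfold tminus; push_cast; field_simp; try ring
      · nlinarith [mul_pos hm hβγ]
    · simp only [se, if_pos (show ((k:ℕ):ℤ) ≤ ⌊γ * ((P : ℝ) - 1) / (β + γ)⌋ from h1), if_neg (show ¬ (((k+1:ℕ)):ℤ) ≤ ⌊γ * ((P : ℝ) - 1) / (β + γ)⌋ from h2)]
      have hfu : γ * ((P : ℝ) - 1) / (β + γ) < (F:ℝ) + 1 := Int.lt_floor_add_one _
      push_cast at h2
      have hFk : (F:ℝ) ≤ (k:ℝ) := by exact_mod_cast (by omega : F ≤ (k:ℤ))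
      have hx : γ * ((P : ℝ) - 1) < ((k:ℝ)+1) * (β+γ) := by
        rw [div_lt_iff₀ hβγ] at hfu; nlinarith
      refine cmp_div_lt (D := μ * (β + γ)) hD
        (a := -(m*((P:ℝ)-1)*γ) + m*(1-β)*(k:ℝ)*(β+γ))
        (b := -(m*((P:ℝ)-1)*γ) + m*(1+γ)*((k:ℝ)+1)*(β+γ) - m*γ*((P:ℝ)-1)*(β+γ)) ?_ ?_ ?_
      · unfold tminus; field_simp; try ring
      · unfold tminus; push_cast; field_simp; try ring
      · nlinarith [mul_pos hm hβγ]
  · have h2 : ¬ (((k+1:ℕ)) : ℤ) ≤ F := by push_cast at h1 ⊢; omega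
    simp only [se, if_neg (show ¬ ((k:ℕ):ℤ) ≤ ⌊γ * ((P : ℝ) - 1) / (β + γ)⌋ from h1), if_neg (show ¬ (((k+1:ℕ)):ℤ) ≤ ⌊γ * ((P : ℝ) - 1) / (β + γ)⌋ from h2)]
    refine cmp_div_lt (D := μ * (β + γ)) hD
      (a := -(m*((P:ℝ)-1)*γ) + m*(1+γ)*(k:ℝ)*(β+γ) - m*γ*((P:ℝ)-1)*(β+γ))
      (b := -(m*((P:ℝ)-1)*γ) + m*(1+γ)*((k:ℝ)+1)*(β+γ) - m*γ*((P:ℝ)-1)*(β+γ)) ?_ ?_ ?_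
    · unfold tminus; field_simp; try ring
    · unfold tminus; push_cast; field_simp; try ring
    · nlinarith [mul_pos hm hβγ]

lemma arr_se (P : ℕ) (hP : 2 ≤ P) (m μ β γ : ℝ) (hm : 0 < m) (hμ : 0 < μ)
    (hβ : 0 < β) (hβ1 : β < 1) (hγ : 0 < γ) :
    ∀ k, k ≤ P - 1 → arr m μ (se P m μ β γ) k = tminus P m μ β γ + (k:ℝ) * (m / μ) := by
  have hβγ : 0 < β + γ := by linarith
  have hD : 0 < μ * (β + γ) := mul_pos hμ hβγ
  have hP2 : (2:ℝ) ≤ (P:ℝ) := by exact_mod_cast hP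
  intro k
  induction k with
  | zero =>
    intro _
    have h0 : ((0:ℕ) : ℤ) ≤ ⌊γ * ((P : ℝ) - 1) / (β + γ)⌋ := by
      apply Int.le_floor.mpr
      push_cast
      apply div_nonneg (by nlinarith) hβγ.le
    show se P m μ β γ 0 = _
    simp only [se, if_pos h0]
    push_cast; ring
  | succ k ih =>
    intro hk
    have hk' : k ≤ P - 1 := by omega
    have hkP : ((k:ℝ) + 1) ≤ (P:ℝ) - 1 := by
      have h2 : (k:ℕ) + 2 ≤ P := by omega
      have : ((k:ℕ):ℝ) + 2 ≤ (P:ℝ) := by exact_mod_cast h2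
      linarith
    show max (arr m μ (se P m μ β γ) k + m / μ) (se P m μ β γ (k+1)) = _
    rw [ih hk', max_eq_left ?_]
    · push_cast; ring
    · by_cases hc : (((k+1:ℕ)) : ℤ) ≤ ⌊γ * ((P : ℝ) - 1) / (β + γ)⌋
      · simp only [se, if_pos hc]
        refine cmp_div_le (D := μ * (β + γ)) hD
          (a := -(m*((P:ℝ)-1)*γ) + m*(1-β)*((k:ℝ)+1)*(β+γ))
          (b := -(m*((P:ℝ)-1)*γ) + (k:ℝ)*m*(β+γ) + m*(β+γ)) ?_ ?_ ?_
        · unfold tminus; push_cast; field_simp; try ring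
        · unfold tminus; field_simp; try ring
        · nlinarith [mul_nonneg (mul_nonneg (mul_pos hm hβ).le
            (by positivity : (0:ℝ) ≤ (k:ℝ)+1)) hβγ.le]
      · simp only [se, if_neg hc]
        refine cmp_div_le (D := μ * (β + γ)) hD
          (a := -(m*((P:ℝ)-1)*γ) + m*(1+γ)*((k:ℝ)+1)*(β+γ) - m*γ*((P:ℝ)-1)*(β+γ))
          (b := -(m*((P:ℝ)-1)*γ) + (k:ℝ)*m*(β+γ) + m*(β+γ)) ?_ ?_ ?_
        · unfold tminus; push_cast; field_simp; try ring
        · unfold tminus; field_simp; try ring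
        · nlinarith [mul_pos (mul_pos hm hγ) hβγ]

lemma cost_se (P : ℕ) (hP : 2 ≤ P) (m μ β γ : ℝ) (hm : 0 < m) (hμ : 0 < μ)
    (hβ : 0 < β) (hβ1 : β < 1) (hγ : 0 < γ) :
    ∀ k, k ≤ P - 1 → cost β γ m μ (se P m μ β γ) k = rho P m μ β γ := by
  have hβγ : 0 < β + γ := by linarith
  have hD : 0 < μ * (β + γ) := mul_pos hμ hβγ
  have hP2 : (2:ℝ) ≤ (P:ℝ) := by exact_mod_cast hP
  intro k hk
  unfold cost
  rw [arr_se P hP m μ β γ hm hμ hβ hβ1 hγ k hk]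
  by_cases hc : ((k:ℕ) : ℤ) ≤ ⌊γ * ((P : ℝ) - 1) / (β + γ)⌋
  · have hkx : (k:ℝ) ≤ γ * ((P : ℝ) - 1) / (β + γ) := by
      calc (k:ℝ) ≤ (⌊γ * ((P : ℝ) - 1) / (β + γ)⌋ : ℝ) := by exact_mod_cast hc
      _ ≤ _ := Int.floor_le _
    have hkx' : (k:ℝ) * (β + γ) ≤ γ * ((P : ℝ) - 1) := (le_div_iff₀ hβγ).mp hkx
    have harr0 : tminus P m μ β γ + (k:ℝ) * (m / μ) ≤ 0 := by
      refine cmp_div_le (D := μ * (β + γ)) hD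
        (a := -(m*((P:ℝ)-1)*γ) + (k:ℝ)*m*(β+γ)) (b := 0) ?_ (by simp) ?_
      · unfold tminus; field_simp; try ring
      · nlinarith
    rw [sdc_of_nonpos β γ _ harr0]
    simp only [se, if_pos hc]
    unfold tminus rho
    field_simp
    ring
  · have hkx : γ * ((P : ℝ) - 1) / (β + γ) < (k:ℝ) := by
      have hfu : γ * ((P : ℝ) - 1) / (β + γ) <
          (⌊γ * ((P : ℝ) - 1) / (β + γ)⌋ : ℝ) + 1 := Int.lt_floor_add_one _
      have : (⌊γ * ((P : ℝ) - 1) / (β + γ)⌋ : ℝ) + 1 ≤ (k:ℝ) := by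
        exact_mod_cast (by omega : ⌊γ * ((P : ℝ) - 1) / (β + γ)⌋ + 1 ≤ (k:ℤ))
      linarith
    have hkx' : γ * ((P : ℝ) - 1) ≤ (k:ℝ) * (β + γ) := by
      rw [div_lt_iff₀ hβγ] at hkx; nlinarith
    have harr0 : 0 ≤ tminus P m μ β γ + (k:ℝ) * (m / μ) := by
      refine cmp_div_le (D := μ * (β + γ)) hD
        (a := 0) (b := -(m*((P:ℝ)-1)*γ) + (k:ℝ)*m*(β+γ)) (by simp) ?_ ?_
      · unfold tminus; field_simp; try ring
      · nlinarith
    rw [sdc_of_nonneg β γ _ harr0]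
    simp only [se, if_neg hc]
    unfold tminus rho
    field_simp
    ring


theorem forecast_at_equilibrium (P : ℕ) (hP : 2 ≤ P) (m μ β γ : ℝ)
    (hm : 0 < m) (hm1 : m ≤ 1) (hμ : 0 < μ)
    (hβ : 0 < β) (hβ1 : β < 1) (hγ : 0 < γ)
    (t : ℝ) (ht : ∀ k, k < P → t ≠ se P m μ β γ k)
    (c : ℝ) (hf : Forecast P β γ m μ (se P m μ β γ) t c) :
    rho P m μ β γ ≤ c ∧
    (tminus P m μ β γ < t → t < tplus P m μ β γ → c = rho P m μ β γ) ∧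
    ((t < tminus P m μ β γ ∨ tplus P m μ β γ < t) →
      c = sdc β γ t ∧ rho P m μ β γ < c) := by
  have hβγ : 0 < β + γ := by linarith
  have hD : 0 < μ * (β + γ) := mul_pos hμ hβγ
  have hP2 : (2:ℝ) ≤ (P:ℝ) := by exact_mod_cast hP
  have hPc : ((P - 1 : ℕ) : ℝ) = (P:ℝ) - 1 := by
    rw [Nat.cast_sub (by omega : 1 ≤ P), Nat.cast_one]
  have hmono := (se_strictMono P m μ β γ hm hμ hβ hβ1 hγ).monotone
  have harr := arr_se P hP m μ β γ hm hμ hβ hβ1 hγ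
  have hcost := cost_se P hP m μ β γ hm hμ hβ hβ1 hγ
  -- basic facts
  have h0F : ((0:ℕ) : ℤ) ≤ ⌊γ * ((P : ℝ) - 1) / (β + γ)⌋ := by
    apply Int.le_floor.mpr
    push_cast
    apply div_nonneg (by nlinarith) hβγ.le
  have hs0 : se P m μ β γ 0 = tminus P m μ β γ := by
    simp only [se, if_pos h0F]; push_cast; ring
  have hPF : ¬ (((P - 1 : ℕ)) : ℤ) ≤ ⌊γ * ((P : ℝ) - 1) / (β + γ)⌋ := by
    push_neg
    have hfl : (⌊γ * ((P : ℝ) - 1) / (β + γ)⌋ : ℝ) ≤ γ * ((P : ℝ) - 1) / (β + γ) :=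
      Int.floor_le _
    have hxlt : γ * ((P:ℝ)-1)/(β+γ) < (P:ℝ)-1 := by
      rw [div_lt_iff₀ hβγ]; nlinarith
    have : (⌊γ * ((P : ℝ) - 1) / (β + γ)⌋ : ℝ) < (((P - 1 : ℕ)) : ℝ) := by
      rw [hPc]; linarith
    exact_mod_cast this
  have hslast : se P m μ β γ (P - 1) = tplus P m μ β γ := by
    simp only [se, if_neg hPF]
    rw [hPc]; unfold tplus tminus; field_simp; try ring
  have harrlast : arr m μ (se P m μ β γ) (P - 1) = tplus P m μ β γ := by
    rw [harr _ le_rfl, hPc]; unfold tplus; ring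
  have htm : tminus P m μ β γ < 0 := by
    refine cmp_div_lt (D := μ * (β + γ)) hD
      (a := -(m*((P:ℝ)-1)*γ)) (b := 0) ?_ (by simp) (by nlinarith [mul_pos (mul_pos hm (by linarith : (0:ℝ) < (P:ℝ)-1)) hγ])
    unfold tminus; field_simp; try ring
  have htp : 0 < tplus P m μ β γ := by
    refine cmp_div_lt (D := μ * (β + γ)) hD
      (a := 0) (b := m*((P:ℝ)-1)*β) (by simp) ?_ (by nlinarith [mul_pos (mul_pos hm (by linarith : (0:ℝ) < (P:ℝ)-1)) hβ])
    unfold tplus tminus; field_simp; try ring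
  have hrhom : rho P m μ β γ = -(β * tminus P m μ β γ) := by
    unfold rho tminus; ring
  have hrhop : rho P m μ β γ = γ * tplus P m μ β γ := by
    unfold rho tplus tminus; field_simp; try ring
  rcases hf with ⟨k, hk, h1, h2, _, hc⟩ | ⟨k, hk, h1, h2, hlt, _⟩ | ⟨h1, h2, _⟩ |
    ⟨hcond, hc⟩
  · -- interior interval, busy bottleneck: c = rho
    rw [hcost k (by omega), hcost (k+1) (by omega)] at hc
    simp at hc
    have hlow : tminus P m μ β γ < t := by
      have := hmono (Nat.zero_le k)
      rw [hs0] at this; linarith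
    have hhigh : t < tplus P m μ β γ := by
      have := hmono (by omega : k + 1 ≤ P - 1)
      rw [hslast] at this; linarith
    exact ⟨le_of_eq hc.symm, fun _ _ => hc, by rintro (h | h) <;> exfalso <;> linarith⟩
  · -- impossible: bottleneck always busy
    exfalso
    rw [harr k (by omega), harr (k+1) (by omega)] at hlt
    push_cast at hlt
    linarith
  · -- impossible: s (P-1) = arr (P-1)
    exfalso
    rw [hslast] at h1; rw [harrlast] at h2; linarith
  · -- outside the peak: c = V t > rho
    rcases hcond with h | h
    · have httm : t < tminus P m μ β γ := by rwa [hs0] at h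
      have hcv : c = -(β * t) := by rw [hc, sdc_of_nonpos β γ t (by linarith)]
      have hlt' : rho P m μ β γ < c := by
        rw [hcv, hrhom]; nlinarith
      exact ⟨hlt'.le, fun ha _ => absurd (lt_trans ha httm) (lt_irrefl _),
        fun _ => ⟨hc, hlt'⟩⟩
    · rw [harrlast] at h
      have http : tplus P m μ β γ < t :=
        lt_of_le_of_ne h (fun he => ht (P-1) (by omega) (he ▸ hslast.symm))
      have hcv : c = γ * t := by rw [hc, sdc_of_nonneg β γ t (by linarith)]
      have hlt' : rho P m μ β γ < c := by
        rw [hcv, hrhop]; nlinarith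
      exact ⟨hlt'.le, fun _ hb => absurd (lt_trans http hb) (lt_irrefl _),
        fun _ => ⟨hc, hlt'⟩⟩
end
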